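/- Let a₋₁ > 0, a₀ ≥ 0, a₁ ≥ 0, a₂ > 0, b ≥ 0, δ ≥ 0, λ ≥ 0, ρ > 1, γ > 1 and 0 < θ < 1. Then there exists a constant K_θ > 0 such that for all y > 0: θ(y^{θ−1} − y^{−1})·(a₋₁y^{−1} − a₀ + a₁y − a₂y^{γ}) + (b²θ/2)·(−((1−θ)/2)·y^{θ+2ρ−2} + y^{2ρ−2}) + λ·(((1+δ)^θ − 1)·y^θ − θ·log(1+δ)) ≤ K_θ. Equivalently, LV(y) + λ(V(y+δy) − V(y)) + (b²θ(1−θ)/4)·y^{θ+2ρ−2} ≤ K_θ. -/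

import Mathlib

/-- Young-type absorption: for `0 ≤ p < q` and `ε > 0`, `y^p ≤ ε y^q + C` on `(0,∞)`. -/
lemma rpow_eps_bound (p q ε : ℝ) (hp : 0 ≤ p) (hpq : p < q) (hε : 0 < ε) :
    ∃ C : ℝ, 0 ≤ C ∧ ∀ y : ℝ, 0 < y → y ^ p ≤ ε * y ^ q + C := by
  set R : ℝ := ε⁻¹ ^ ((q - p)⁻¹) with hR
  have hRpos : 0 < R := Real.rpow_pos_of_pos (by positivity) _
  refine ⟨R ^ p, by positivity, fun y hy => ?_⟩
  rcases le_or_gt y R with h | h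
  · have h1 : y ^ p ≤ R ^ p := Real.rpow_le_rpow hy.le h hp
    have h2 : 0 ≤ ε * y ^ q := by positivity
    linarith
  · have hqp : 0 < q - p := sub_pos.2 hpq
    have hRq : R ^ (q - p) = ε⁻¹ := by
      rw [hR, ← Real.rpow_mul (by positivity), inv_mul_cancel₀ hqp.ne', Real.rpow_one]
    have h1 : ε⁻¹ ≤ y ^ (q - p) := by
      rw [← hRq]; exact Real.rpow_le_rpow hRpos.le h.le hqp.le
    have h2 : 1 ≤ ε * y ^ (q - p) := by
      rw [← mul_inv_cancel₀ hε.ne']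
      exact mul_le_mul_of_nonneg_left h1 hε.le
    have h3 : y ^ p * 1 ≤ y ^ p * (ε * y ^ (q - p)) :=
      mul_le_mul_of_nonneg_left h2 (Real.rpow_pos_of_pos hy p).le
    have h4 : y ^ p * y ^ (q - p) = y ^ q := by
      rw [← Real.rpow_add hy]; ring_nf
    have h5 : 0 ≤ R ^ p := by positivity
    nlinarith [h3, h4]

/-- Dual version: for `q < p ≤ 0`. -/
lemma rpow_eps_bound_neg (p q ε : ℝ) (hp : p ≤ 0) (hpq : q < p) (hε : 0 < ε) :
    ∃ C : ℝ, 0 ≤ C ∧ ∀ y : ℝ, 0 < y → y ^ p ≤ ε * y ^ q + C := by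
  obtain ⟨C, hC, hC2⟩ := rpow_eps_bound (-p) (-q) ε (by linarith) (by linarith) hε
  refine ⟨C, hC, fun y hy => ?_⟩
  have h := hC2 y⁻¹ (by positivity)
  have e1 : (y⁻¹ : ℝ) ^ (-p) = y ^ p := by
    rw [Real.inv_rpow hy.le, ← Real.rpow_neg hy.le, neg_neg]
  have e2 : (y⁻¹ : ℝ) ^ (-q) = y ^ q := by
    rw [Real.inv_rpow hy.le, ← Real.rpow_neg hy.le, neg_neg]
  rw [e1, e2] at h
  exact h



set_option maxHeartbeats 1000000 in
/-- Key estimate for the asymptotic boundedness of `(1/t)∫₀ᵗ E[y(s)^{θ+2ρ-2}]ds` for the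
generalized Ait-Sahalia model with Poisson jumps: retaining only half of the negative term
`-(b²θ(1-θ)/2) y^{θ+2ρ-2}` of `LV`, the expression `LV(y) + λ(V(y+δy) - V(y))
+ (b²θ(1-θ)/4) y^{θ+2ρ-2}` is bounded above on `(0, ∞)`, where
`V(y) = y^θ - 1 - θ log y`. Here `am1` stands for `a₋₁` and `lam` for `λ`. -/
theorem ait_sahalia_time_average_drift_bound
    (am1 a₀ a₁ a₂ b δ lam ρ γ θ : ℝ)
    (ham1 : 0 < am1) (ha₀ : 0 ≤ a₀) (ha₁ : 0 ≤ a₁) (ha₂ : 0 < a₂)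
    (hb : 0 ≤ b) (hδ : 0 ≤ δ) (hlam : 0 ≤ lam)
    (hρ : 1 < ρ) (hγ : 1 < γ) (hθ0 : 0 < θ) (hθ1 : θ < 1) :
    ∃ Kθ : ℝ, 0 < Kθ ∧ ∀ y : ℝ, 0 < y →
      θ * (y ^ (θ - 1) - y⁻¹) * (am1 * y⁻¹ - a₀ + a₁ * y - a₂ * y ^ γ)
        + (b ^ 2 * θ / 2) * (-((1 - θ) / 2) * y ^ (θ + 2 * ρ - 2) + y ^ (2 * ρ - 2))
        + lam * (((1 + δ) ^ θ - 1) * y ^ θ - θ * Real.log (1 + δ)) ≤ Kθ := by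
  set c₃ : ℝ := lam * ((1 + δ) ^ θ - 1) with hc₃
  have hc₃0 : 0 ≤ c₃ := by
    have h1 : (1 : ℝ) ≤ (1 + δ) ^ θ := by
      calc (1 : ℝ) = 1 ^ θ := (Real.one_rpow θ).symm
        _ ≤ (1 + δ) ^ θ := Real.rpow_le_rpow (by norm_num) (by linarith) hθ0.le
    have : 0 ≤ (1 + δ) ^ θ - 1 := by linarith
    exact mul_nonneg hlam this
  -- absorption constants
  obtain ⟨C₁, hC₁, hB₁⟩ := rpow_eps_bound_neg (θ - 2) (-2) (1/2) (by linarith) (by linarith)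
    (by norm_num)
  obtain ⟨C₂, hC₂, hB₂⟩ := rpow_eps_bound_neg (-1) (-2) (am1 / (2 * (a₀ + 1)))
    (by norm_num) (by norm_num) (by positivity)
  obtain ⟨C₃, hC₃, hB₃⟩ := rpow_eps_bound θ (θ + γ - 1) (θ * a₂ / (3 * (θ * a₁ + 1)))
    hθ0.le (by linarith) (by positivity)
  obtain ⟨C₄, hC₄, hB₄⟩ := rpow_eps_bound (γ - 1) (θ + γ - 1) (1/3)
    (by linarith) (by linarith) (by norm_num)
  obtain ⟨C₅, hC₅, hB₅⟩ := rpow_eps_bound θ (θ + γ - 1) (θ * a₂ / (3 * (c₃ + 1)))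
    hθ0.le (by linarith) (by positivity)
  obtain ⟨C₆, hC₆, hB₆⟩ := rpow_eps_bound (2 * ρ - 2) (θ + 2 * ρ - 2) ((1 - θ) / 2)
    (by linarith) (by linarith) (by linarith)
  refine ⟨θ * am1 * C₁ + θ * a₀ * C₂ + θ * a₁ * C₃ + θ * a₂ * C₄ + c₃ * C₅
      + (b ^ 2 * θ / 2) * C₆ + 1, by positivity, fun y hy => ?_⟩
  -- expansion of the drift product
  have e1 : y ^ (θ - 1) * y⁻¹ = y ^ (θ - 2) := by
    rw [← Real.rpow_neg_one y, ← Real.rpow_add hy]; ring_nf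
  have e2 : y ^ (θ - 1) * y = y ^ θ := by
    rw [← Real.rpow_add_one hy.ne']; ring_nf
  have e3 : y ^ (θ - 1) * y ^ γ = y ^ (θ + γ - 1) := by
    rw [← Real.rpow_add hy]; ring_nf
  have e4 : y⁻¹ * y⁻¹ = y ^ (-2 : ℝ) := by
    rw [← Real.rpow_neg_one y, ← Real.rpow_add hy]; norm_num
  have e5 : y⁻¹ * y = 1 := inv_mul_cancel₀ hy.ne'
  have e6 : y⁻¹ * y ^ γ = y ^ (γ - 1) := by
    rw [← Real.rpow_neg_one y, ← Real.rpow_add hy]; ring_nf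
  have expand : θ * (y ^ (θ - 1) - y⁻¹) * (am1 * y⁻¹ - a₀ + a₁ * y - a₂ * y ^ γ)
      = θ * am1 * y ^ (θ - 2) - θ * a₀ * y ^ (θ - 1) + θ * a₁ * y ^ θ
        - θ * a₂ * y ^ (θ + γ - 1) - θ * am1 * y ^ (-2 : ℝ) + θ * a₀ * y⁻¹
        - θ * a₁ + θ * a₂ * y ^ (γ - 1) := by
    linear_combination (θ * am1) * e1 + (θ * a₁) * e2 - (θ * a₂) * e3
      - (θ * am1) * e4 - (θ * a₁) * e5 + (θ * a₂) * e6
  -- absorbed bounds for each positive term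
  have hym2 : (0:ℝ) ≤ y ^ (-2 : ℝ) := (Real.rpow_pos_of_pos hy _).le
  have hyE : (0:ℝ) ≤ y ^ (θ + γ - 1) := (Real.rpow_pos_of_pos hy _).le
  have H1 : θ * am1 * y ^ (θ - 2) ≤ (θ * am1 / 2) * y ^ (-2 : ℝ) + θ * am1 * C₁ := by
    have := mul_le_mul_of_nonneg_left (hB₁ y hy) (by positivity : (0:ℝ) ≤ θ * am1)
    nlinarith
  have H2 : θ * a₀ * y⁻¹ ≤ (θ * am1 / 2) * y ^ (-2 : ℝ) + θ * a₀ * C₂ := by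
    have h := mul_le_mul_of_nonneg_left (hB₂ y hy) (by positivity : (0:ℝ) ≤ θ * a₀)
    have hinv : y ^ (-1 : ℝ) = y⁻¹ := Real.rpow_neg_one y
    rw [hinv] at h
    have hcoef : θ * a₀ * (am1 / (2 * (a₀ + 1))) ≤ θ * am1 / 2 := by
      have h1 : a₀ / (a₀ + 1) ≤ 1 := by
        rw [div_le_one (by positivity)]; linarith
      have h2 : θ * a₀ * (am1 / (2 * (a₀ + 1))) = θ * am1 / 2 * (a₀ / (a₀ + 1)) := by
        field_simp
      have h3 := mul_le_mul_of_nonneg_left h1 (by positivity : (0:ℝ) ≤ θ * am1 / 2)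
      rw [h2]; linarith
    nlinarith [mul_le_mul_of_nonneg_right hcoef hym2]
  have H3 : θ * a₁ * y ^ θ ≤ (θ * a₂ / 3) * y ^ (θ + γ - 1) + θ * a₁ * C₃ := by
    have h := mul_le_mul_of_nonneg_left (hB₃ y hy) (by positivity : (0:ℝ) ≤ θ * a₁)
    have hcoef : θ * a₁ * (θ * a₂ / (3 * (θ * a₁ + 1))) ≤ θ * a₂ / 3 := by
      have h1 : θ * a₁ / (θ * a₁ + 1) ≤ 1 := by
        rw [div_le_one (by positivity)]; linarith
      have h2 : θ * a₁ * (θ * a₂ / (3 * (θ * a₁ + 1))) = θ * a₂ / 3 * (θ * a₁ / (θ * a₁ + 1)) := by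
        field_simp
      have h3 := mul_le_mul_of_nonneg_left h1 (by positivity : (0:ℝ) ≤ θ * a₂ / 3)
      rw [h2]; linarith
    nlinarith [mul_le_mul_of_nonneg_right hcoef hyE]
  have H4 : θ * a₂ * y ^ (γ - 1) ≤ (θ * a₂ / 3) * y ^ (θ + γ - 1) + θ * a₂ * C₄ := by
    have h := mul_le_mul_of_nonneg_left (hB₄ y hy) (by positivity : (0:ℝ) ≤ θ * a₂)
    nlinarith
  have H5 : c₃ * y ^ θ ≤ (θ * a₂ / 3) * y ^ (θ + γ - 1) + c₃ * C₅ := by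
    have h := mul_le_mul_of_nonneg_left (hB₅ y hy) hc₃0
    have hcoef : c₃ * (θ * a₂ / (3 * (c₃ + 1))) ≤ θ * a₂ / 3 := by
      have h1 : c₃ / (c₃ + 1) ≤ 1 := by
        rw [div_le_one (by positivity)]; linarith
      have h2 : c₃ * (θ * a₂ / (3 * (c₃ + 1))) = θ * a₂ / 3 * (c₃ / (c₃ + 1)) := by
        field_simp
      have h3 := mul_le_mul_of_nonneg_left h1 (by positivity : (0:ℝ) ≤ θ * a₂ / 3)
      rw [h2]; linarith
    nlinarith [mul_le_mul_of_nonneg_right hcoef hyE]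
  have H6 : (b ^ 2 * θ / 2) * y ^ (2 * ρ - 2)
      ≤ (b ^ 2 * θ * (1 - θ) / 4) * y ^ (θ + 2 * ρ - 2) + (b ^ 2 * θ / 2) * C₆ := by
    have h := mul_le_mul_of_nonneg_left (hB₆ y hy) (by positivity : (0:ℝ) ≤ b ^ 2 * θ / 2)
    nlinarith
  -- dropped nonpositive terms
  have d1 : 0 ≤ θ * a₀ * y ^ (θ - 1) := by positivity
  have d2 : 0 ≤ θ * a₁ := by positivity
  have d3 : 0 ≤ lam * (θ * Real.log (1 + δ)) :=
    mul_nonneg hlam (mul_nonneg hθ0.le (Real.log_nonneg (by linarith)))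
  rw [expand]
  have goal_eq : lam * (((1 + δ) ^ θ - 1) * y ^ θ - θ * Real.log (1 + δ))
      = c₃ * y ^ θ - lam * (θ * Real.log (1 + δ)) := by rw [hc₃]; ring
  rw [goal_eq]
  linarith [H1, H2, H3, H4, H5, H6]
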